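/- arXiv:1202.3524 — 3 statements merged into one kernel-verified Lean document; each statement's English description precedes it below -/
import Mathlib

section
/- The order ≺_{s,m} on leading pairs is a strictly well-founded partial order: there is no infinite strictly descending chain (s_n, m_n) with, for each n, some monomial λ such that λ·s_{n+1} = s_n and λ·m_{n+1} <_m m_n. -/
/-- the order ≺_{s,m} on leading pairs (s, m) ∈ M_d × M,
defined by (s', m') ≺_{s,m} (s, m) iff ∃ λ, λ·s' = s and λ·m' <ₘ m, is a
strictly well-founded partial order: it is irreflexive, transitive and admits
no infinite strictly descending chain. -/
theorem precSM_strict_wellFounded {n d : ℕ}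
    (mle : (Fin n → ℕ) → (Fin n → ℕ) → Prop)
    (hmlin : IsLinearOrder (Fin n → ℕ) mle)
    (hm0 : ∀ m : Fin n → ℕ, mle 0 m)
    (hmadd : ∀ a b c : Fin n → ℕ, mle a b → mle (c + a) (c + b)) :
    Irreflexive (fun x y : (Fin d × (Fin n → ℕ)) × (Fin n → ℕ) =>
      ∃ lam : Fin n → ℕ, (x.1.1, lam + x.1.2) = y.1 ∧
        (mle (lam + x.2) y.2 ∧ ¬ mle y.2 (lam + x.2))) ∧
    Transitive (fun x y : (Fin d × (Fin n → ℕ)) × (Fin n → ℕ) =>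
      ∃ lam : Fin n → ℕ, (x.1.1, lam + x.1.2) = y.1 ∧
        (mle (lam + x.2) y.2 ∧ ¬ mle y.2 (lam + x.2))) ∧
    ¬ ∃ f : ℕ → (Fin d × (Fin n → ℕ)) × (Fin n → ℕ),
      ∀ k : ℕ, ∃ lam : Fin n → ℕ, ((f (k+1)).1.1, lam + (f (k+1)).1.2) = (f k).1 ∧
        (mle (lam + (f (k+1)).2) (f k).2 ∧ ¬ mle (f k).2 (lam + (f (k+1)).2)) := by
  haveI := hmlin
  have hrefl : ∀ a, mle a a := fun a => refl_of mle a
  have htrans : ∀ {a b c}, mle a b → mle b c → mle a c := fun h1 h2 => trans_of mle h1 h2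
  have hanti : ∀ {a b}, mle a b → mle b a → a = b := fun h1 h2 => antisymm_of mle h1 h2
  -- strict order
  set slt : (Fin n → ℕ) → (Fin n → ℕ) → Prop := fun a b => mle a b ∧ ¬ mle b a with hslt
  have slt_trans : ∀ {a b c}, slt a b → slt b c → slt a c := by
    rintro a b c ⟨h1, h1'⟩ ⟨h2, h2'⟩
    exact ⟨htrans h1 h2, fun h => h2' (htrans h h1)⟩
  have slt_le_trans : ∀ {a b c}, mle a b → slt b c → slt a c := by
    rintro a b c h1 ⟨h2, h2'⟩
    exact ⟨htrans h1 h2, fun h => h2' (htrans h h1)⟩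
  have le_slt_trans : ∀ {a b c}, slt a b → mle b c → slt a c := by
    rintro a b c ⟨h1, h1'⟩ h2
    exact ⟨htrans h1 h2, fun h => h1' (htrans h2 h)⟩
  have slt_add : ∀ (c : Fin n → ℕ) {a b}, slt a b → slt (c + a) (c + b) := by
    rintro c a b ⟨h1, h1'⟩
    refine ⟨hmadd _ _ _ h1, fun h => ?_⟩
    have : c + a = c + b := hanti (hmadd _ _ _ h1) h
    exact h1' (add_left_cancel this ▸ hrefl b)
  have le_addl : ∀ (c a : Fin n → ℕ), mle a (c + a) := by
    intro c a
    have := hmadd 0 c a (hm0 c)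
    rw [add_comm]
    simpa using this
  refine ⟨?_, ?_, ?_⟩
  · rintro x ⟨lam, h1, h2, h3⟩
    have hl : lam + x.1.2 = x.1.2 := congrArg Prod.snd h1
    have : lam = 0 := by
      have := add_right_cancel (a := lam) (b := x.1.2) (c := 0) (by simpa using hl)
      exact this
    rw [this] at h2 h3
    simp only [zero_add] at h2 h3
    exact h3 h2
  · rintro x y z ⟨l1, h1, h2, h3⟩ ⟨l2, h4, h5, h6⟩
    refine ⟨l2 + l1, ?_, ?_, ?_⟩
    · rw [← h4, ← h1]; simp [add_assoc]
    · have hA : mle (l2 + (l1 + x.2)) (l2 + y.2) := hmadd _ _ _ h2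
      have : mle (l2 + l1 + x.2) z.2 := by
        rw [add_assoc]; exact htrans hA h5
      exact this
    · intro h
      have hA : mle (l2 + (l1 + x.2)) (l2 + y.2) := hmadd _ _ _ h2
      rw [add_assoc] at h
      exact h6 (htrans h hA)
  · rintro ⟨f, hf⟩
    set g : ℕ → Fin n → ℕ := fun k => (f k).1.2 + (f k).2 with hg
    have hstep : ∀ k, slt (g (k + 1)) (g k) := by
      intro k
      obtain ⟨lam, h1, h2, h3⟩ := hf k
      have hs : (f k).1.2 = lam + (f (k+1)).1.2 := (congrArg Prod.snd h1).symm
      have hmid : slt ((f (k+1)).1.2 + (lam + (f (k+1)).2)) ((f (k+1)).1.2 + (f k).2) :=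
        slt_add _ ⟨h2, h3⟩
      have hlow : mle (g (k+1)) ((f (k+1)).1.2 + (lam + (f (k+1)).2)) :=
        hmadd _ _ _ (le_addl lam _)
      have hhigh : mle ((f (k+1)).1.2 + (f k).2) (g k) := by
        have := le_addl lam ((f (k+1)).1.2 + (f k).2)
        rw [hg]
        simp only [hs, add_assoc]
        exact this
      exact le_slt_trans (slt_le_trans hlow hmid) hhigh
    have hlt : ∀ {i j : ℕ}, i < j → slt (g j) (g i) := by
      intro i j hij
      induction j with
      | zero => omega
      | succ j ih =>
        rcases Nat.lt_succ_iff_lt_or_eq.mp hij with h | h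
        · exact slt_trans (hstep j) (ih h)
        · rw [h]; exact hstep j
    -- Dickson's lemma
    haveI : IsWellOrder ℕ (· < ·) := ⟨⟩
    obtain ⟨φ, hφ⟩ := (Set.isPWO_of_wellQuasiOrderedLE (Set.univ : Set (Fin n → ℕ))).exists_monotone_subseq (f := g)
      (fun k => Set.mem_univ _)
    have hle : g (φ 0) ≤ g (φ 1) := hφ (by omega)
    obtain ⟨c, hc⟩ : ∃ c, g (φ 1) = c + g (φ 0) :=
      ⟨g (φ 1) - g (φ 0), by
        funext i
        show g (φ 1) i = (g (φ 1) i - g (φ 0) i) + g (φ 0) i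
        exact (Nat.sub_add_cancel (hle i)).symm⟩
    have h1 : mle (g (φ 0)) (g (φ 1)) := hc ▸ le_addl c (g (φ 0))
    have h2 : slt (g (φ 1)) (g (φ 0)) := hlt (φ.strictMono (by omega))
    exact h2.2 h1
end

section
/- Compatibility lemma: suppose the admissible monomial order ≤_m and the admissible module order ≤_s are compatible, meaning σe_j ≤_s τe_j iff σ ≤_m τ. If (s₁, m₁) and (s₂, m₂) are leading pairs with s₁ | s₂ and m₁ | m₂ (componentwise divisibility in M_d and M respectively), then exactly one of the following holds: there is a monomial λ with λs₁ = s₂ and λm₁ = m₂ (so (s₁,m₁) super-divides (s₂,m₂)); or (s₁,m₁) ≺_{s,m} (s₂,m₂); or (s₁,m₁) ≺_{m,s} (s₂,m₂). -/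
/-- compatibility lemma. If ≤ₘ and ≤ₛ are compatible admissible
orders and (s₁, m₁), (s₂, m₂) are leading pairs with s₁ | s₂ (in M_d) and
m₁ | m₂ (in M), then exactly one of the following holds: (s₁,m₁) super-divides
(s₂,m₂); (s₁,m₁) ≺_{s,m} (s₂,m₂); (s₁,m₁) ≺_{m,s} (s₂,m₂). -/
theorem compatibility_lemma {n d : ℕ}
    (mle : (Fin n → ℕ) → (Fin n → ℕ) → Prop)
    (sle : (Fin d × (Fin n → ℕ)) → (Fin d × (Fin n → ℕ)) → Prop)
    (hmlin : IsLinearOrder (Fin n → ℕ) mle)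
    (hm0 : ∀ m : Fin n → ℕ, mle 0 m)
    (hmadd : ∀ a b c : Fin n → ℕ, mle a b → mle (c + a) (c + b))
    (hslin : IsLinearOrder (Fin d × (Fin n → ℕ)) sle)
    (hs0 : ∀ (i : Fin d) (m : Fin n → ℕ), sle (i, 0) (i, m))
    (hsadd : ∀ (i : Fin d) (a b s : Fin n → ℕ),
      sle (i, a) (i, b) → sle (i, s + a) (i, s + b))
    (compat : ∀ (j : Fin d) (σ τ : Fin n → ℕ), sle (j, σ) (j, τ) ↔ mle σ τ)
    (s₁ s₂ : Fin d × (Fin n → ℕ)) (m₁ m₂ : Fin n → ℕ)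
    (hdivs : s₁.1 = s₂.1 ∧ ∃ c, s₁.2 + c = s₂.2)
    (hdivm : ∃ c, m₁ + c = m₂) :
    ((∃ lam : Fin n → ℕ, (s₁.1, lam + s₁.2) = s₂ ∧ lam + m₁ = m₂) ∨
     (∃ lam : Fin n → ℕ, (s₁.1, lam + s₁.2) = s₂ ∧
        (mle (lam + m₁) m₂ ∧ ¬ mle m₂ (lam + m₁))) ∨
     (∃ lam : Fin n → ℕ, lam + m₁ = m₂ ∧
        (sle (s₁.1, lam + s₁.2) s₂ ∧ ¬ sle s₂ (s₁.1, lam + s₁.2)))) ∧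
    ¬ ((∃ lam : Fin n → ℕ, (s₁.1, lam + s₁.2) = s₂ ∧ lam + m₁ = m₂) ∧
       (∃ lam : Fin n → ℕ, (s₁.1, lam + s₁.2) = s₂ ∧
          (mle (lam + m₁) m₂ ∧ ¬ mle m₂ (lam + m₁)))) ∧
    ¬ ((∃ lam : Fin n → ℕ, (s₁.1, lam + s₁.2) = s₂ ∧ lam + m₁ = m₂) ∧
       (∃ lam : Fin n → ℕ, lam + m₁ = m₂ ∧
          (sle (s₁.1, lam + s₁.2) s₂ ∧ ¬ sle s₂ (s₁.1, lam + s₁.2)))) ∧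
    ¬ ((∃ lam : Fin n → ℕ, (s₁.1, lam + s₁.2) = s₂ ∧
          (mle (lam + m₁) m₂ ∧ ¬ mle m₂ (lam + m₁))) ∧
       (∃ lam : Fin n → ℕ, lam + m₁ = m₂ ∧
          (sle (s₁.1, lam + s₁.2) s₂ ∧ ¬ sle s₂ (s₁.1, lam + s₁.2)))) := by
  obtain ⟨hidx, cs, hcs⟩ := hdivs
  obtain ⟨cm, hcm⟩ := hdivm
  have htot := hmlin.toTotal.total
  have hanti := hmlin.toIsPartialOrder.toAntisymm.antisymm
  have hrefl : ∀ a, mle a a := fun a => (htot a a).elim id id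
  have hsrefl : ∀ a, sle a a := fun a =>
    (hslin.toTotal.total a a).elim id id
  -- canceling: lam forced
  have cancel : ∀ a b c : Fin n → ℕ, a + c = b + c → a = b := by
    intro a b c h
    funext i
    have := congrFun h i
    simpa using this
  have hlam_s : ∀ lam, (s₁.1, lam + s₁.2) = s₂ → lam = cs := by
    intro lam h
    have h2 : lam + s₁.2 = s₂.2 := congrArg Prod.snd h
    have : lam + s₁.2 = cs + s₁.2 := by rw [h2, ← hcs, add_comm]
    exact cancel _ _ _ this
  have hlam_m : ∀ lam, lam + m₁ = m₂ → lam = cm := by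
    intro lam h
    have : lam + m₁ = cm + m₁ := by rw [h, ← hcm, add_comm]
    exact cancel _ _ _ this
  have hs2 : s₂ = (s₁.1, cs + s₁.2) := by
    have : cs + s₁.2 = s₂.2 := by rw [add_comm, hcs]
    rw [hidx]; exact (Prod.ext rfl this.symm)
  have hm2 : m₂ = cm + m₁ := by rw [← hcm, add_comm]
  -- strictness on m side when cs ≠ cm and mle cs cm
  have strictm : mle cs cm → cs ≠ cm → mle (cs + m₁) m₂ ∧ ¬ mle m₂ (cs + m₁) := by
    intro hle hne
    constructor
    · rw [hm2]
      have := hmadd cs cm m₁ hle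
      rwa [add_comm m₁ cs, add_comm m₁ cm] at this
    · intro hrev
      rw [hm2] at hrev
      have h1 : mle (cs + m₁) (cm + m₁) := by
        have := hmadd cs cm m₁ hle
        rwa [add_comm m₁ cs, add_comm m₁ cm] at this
      have := hanti _ _ hrev h1
      exact hne (cancel _ _ _ this.symm)
  have stricts : mle cm cs → cm ≠ cs →
      sle (s₁.1, cm + s₁.2) s₂ ∧ ¬ sle s₂ (s₁.1, cm + s₁.2) := by
    intro hle hne
    have h1 : mle (cm + s₁.2) (cs + s₁.2) := by
      have := hmadd cm cs s₁.2 hle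
      rwa [add_comm s₁.2 cm, add_comm s₁.2 cs] at this
    constructor
    · rw [hs2]; exact (compat s₁.1 _ _).mpr h1
    · intro hrev
      rw [hs2] at hrev
      have h2 : mle (cs + s₁.2) (cm + s₁.2) := (compat s₁.1 _ _).mp hrev
      have := hanti _ _ h2 h1
      exact hne (cancel _ _ _ this).symm
  refine ⟨?_, ?_, ?_, ?_⟩
  · by_cases heq : cs = cm
    · exact Or.inl ⟨cs, hs2.symm, by rw [heq, add_comm]; exact hcm⟩
    · rcases htot cs cm with h | h
      · exact Or.inr (Or.inl ⟨cs, hs2.symm, strictm h heq⟩)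
      · exact Or.inr (Or.inr ⟨cm, hm2.symm,
          stricts h (fun e => heq e.symm)⟩)
  · rintro ⟨⟨l1, hl1s, hl1m⟩, ⟨l2, hl2s, hl2m, hl2n⟩⟩
    have e1 : l1 = cs := hlam_s _ hl1s
    have e2 : l2 = cs := hlam_s _ hl2s
    exact hl2n (by rw [e2, ← e1, hl1m]; exact hrefl m₂)
  · rintro ⟨⟨l1, hl1s, hl1m⟩, ⟨l2, hl2m, hl2s, hl2n⟩⟩
    have e1 : l1 = cm := hlam_m _ hl1m
    have e2 : l2 = cm := hlam_m _ hl2m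
    apply hl2n
    rw [e2, ← e1]
    rw [hl1s]
    exact hsrefl s₂
  · rintro ⟨⟨l1, hl1s, hl1m, hl1n⟩, ⟨l2, hl2m, hl2s, hl2n⟩⟩
    have e1 : l1 = cs := hlam_s _ hl1s
    have e2 : l2 = cm := hlam_m _ hl2m
    rw [e1] at hl1m hl1n
    rw [e2] at hl2s hl2n
    -- hl1n : ¬ mle m₂ (cs + m₁), m₂ = cm + m₁
    have hnotmc : ¬ mle cm cs := by
      intro h
      apply hl1n
      rw [hm2]
      have := hmadd cm cs m₁ h
      rwa [add_comm m₁ cm, add_comm m₁ cs] at this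
    have hcscm : mle cs cm := (htot cs cm).resolve_right hnotmc
    apply hl2n
    rw [hs2]
    apply (compat s₁.1 _ _).mpr
    have := hmadd cs cm s₁.2 hcscm
    rwa [add_comm s₁.2 cs, add_comm s₁.2 cm] at this
end

section
/- Finiteness of the top-reduced S-Gröbner basis: if the admissible monomial order ≤_m and the admissible module order ≤_s are compatible, then the set of leading pairs of top-irreducible sig-polynomials (elements of SP* not top-reducible by any other element of SP*) is finite. Equivalently, the top-reduced S-Gröbner basis of SP is finite up to equivalence of sig-polynomials. -/
/-! Common setup: R = k[x₁,…,xₙ], monomials `Mo n = Fin n →₀ ℕ`, the monomial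
monomodule `Md n d = Fin d × Mo n`, leading pairs `LP n d` (with `none` as the
polynomial part of a syzygy), sig-polynomials in `SP = {(u,p) : u·f = p}`,
and the orders ≺_{m,s}, ≺_{s,m} and super-divisibility on leading pairs. -/

/-- Monomials in n variables. -/
abbrev Mo (n : ℕ) := Fin n →₀ ℕ

/-- The monomial monomodule M_d = { m·e_i }. -/
abbrev Md (n d : ℕ) := Fin d × Mo n

/-- Leading pairs: a signature together with either a leading monomial or
`none` (for syzygies, whose polynomial part is 0). -/
abbrev LP (n d : ℕ) := Md n d × Option (Mo n)

/-- Multiplication of a module monomial by a monomial. -/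
noncomputable def smulMd {n d : ℕ} (lam : Mo n) (s : Md n d) : Md n d := (s.1, lam + s.2)

/-- `m` is the leading monomial of the polynomial `p` w.r.t. `mle`. -/
def IsLMp {k : Type*} [Field k] {n : ℕ} (mle : Mo n → Mo n → Prop)
    (p : MvPolynomial (Fin n) k) (m : Mo n) : Prop :=
  m ∈ p.support ∧ ∀ m' ∈ p.support, mle m' m

/-- `s` is the signature (leading module monomial) of `u` w.r.t. `sle`. -/
def IsSig {k : Type*} [Field k] {n d : ℕ} (sle : Md n d → Md n d → Prop)
    (u : Fin d → MvPolynomial (Fin n) k) (s : Md n d) : Prop :=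
  s.2 ∈ (u s.1).support ∧ ∀ (j : Fin d), ∀ m' ∈ (u j).support, sle (j, m') s

/-- `lp` is the leading pair LM(u, p) = (lm(u), lm(p)) of the sig-polynomial
`up`, with `none` as polynomial part when p = 0. -/
def IsLP {k : Type*} [Field k] {n d : ℕ} (mle : Mo n → Mo n → Prop)
    (sle : Md n d → Md n d → Prop)
    (up : (Fin d → MvPolynomial (Fin n) k) × MvPolynomial (Fin n) k)
    (lp : LP n d) : Prop :=
  IsSig sle up.1 lp.1 ∧
    ((up.2 = 0 ∧ lp.2 = none) ∨ ∃ m, lp.2 = some m ∧ IsLMp mle up.2 m)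

/-- Membership in SP: u·f = p. -/
def SPmem {k : Type*} [Field k] {n d : ℕ} (f : Fin d → MvPolynomial (Fin n) k)
    (up : (Fin d → MvPolynomial (Fin n) k) × MvPolynomial (Fin n) k) : Prop :=
  ∑ i, up.1 i * f i = up.2

/-- The set LM(SP*) of leading pairs of nonzero sig-polynomials. -/
def LMSPstar {k : Type*} [Field k] {n d : ℕ} (mle : Mo n → Mo n → Prop)
    (sle : Md n d → Md n d → Prop) (f : Fin d → MvPolynomial (Fin n) k) :
    Set (LP n d) :=
  { lp | ∃ up, SPmem f up ∧ up ≠ 0 ∧ IsLP mle sle up lp }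

/-- The set LM(NSP) of leading pairs of non-syzygy sig-polynomials. -/
def LMNSP {k : Type*} [Field k] {n d : ℕ} (mle : Mo n → Mo n → Prop)
    (sle : Md n d → Md n d → Prop) (f : Fin d → MvPolynomial (Fin n) k) :
    Set (LP n d) :=
  { lp | ∃ up, SPmem f up ∧ up.2 ≠ 0 ∧ IsLP mle sle up lp }

/-- The order ≺_{m,s} on leading pairs: x ≺_{m,s} y iff ∃ λ, λ·mₓ = m_y and
λ·sₓ <ₛ s_y. -/
def precMS {n d : ℕ} (sle : Md n d → Md n d → Prop) (x y : LP n d) : Prop :=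
  ∃ m m' lam, x.2 = some m' ∧ y.2 = some m ∧ lam + m' = m ∧
    (sle (smulMd lam x.1) y.1 ∧ ¬ sle y.1 (smulMd lam x.1))

/-- The order ≺_{s,m} on leading pairs (with the extension to syzygies):
x ≺_{s,m} y iff ∃ λ, λ·sₓ = s_y and λ·mₓ <ₘ m_y; a syzygy leading pair is
below y iff its signature divides that of y. -/
def precSM {n d : ℕ} (mle : Mo n → Mo n → Prop) (x y : LP n d) : Prop :=
  (∃ m m' lam, x.2 = some m' ∧ y.2 = some m ∧ smulMd lam x.1 = y.1 ∧
    (mle (lam + m') m ∧ ¬ mle m (lam + m'))) ∨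
  (x.2 = none ∧ (∃ m, y.2 = some m) ∧ ∃ lam : Mo n, smulMd lam x.1 = y.1)

/-- Super-divisibility of leading pairs: ∃ λ with λ·sₓ = s_y and λ·mₓ = m_y. -/
def superdiv {n d : ℕ} (x y : LP n d) : Prop :=
  ∃ lam : Mo n, smulMd lam x.1 = y.1 ∧
    ((x.2 = none ∧ y.2 = none) ∨ ∃ m m', x.2 = some m' ∧ y.2 = some m ∧ lam + m' = m)

/-- encoding -/
noncomputable def encLP {n d : ℕ} (x : LP n d) : (Fin d →₀ ℕ) × Mo n × Mo n × ℕ :=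
  (Finsupp.single x.1.1 1, x.1.2, x.2.getD 0, if x.2 = none then 0 else 1)

theorem encLP_injective {n d : ℕ} : Function.Injective (encLP (n := n) (d := d)) := by
  rintro ⟨⟨j, σ⟩, o⟩ ⟨⟨j', σ'⟩, o'⟩ h
  simp only [encLP, Prod.mk.injEq] at h
  obtain ⟨h1, h2, h3, h4⟩ := h
  have hj : j = j' := by
    have := congrArg (fun f => f j) h1
    simp [Finsupp.single_apply] at this
    by_contra hne
    simp [hne, (Ne.symm hne)] at this
  subst hj h2
  cases o <;> cases o' <;> simp_all

/-- Key lemma: componentwise divisibility (as encoded) implies one of the three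
reductions. -/
theorem div_implies_red {n d : ℕ}
    (mle : Mo n → Mo n → Prop) (sle : Md n d → Md n d → Prop)
    (hmlin : IsLinearOrder (Mo n) mle)
    (hmadd : ∀ a b c : Mo n, mle a b → mle (c + a) (c + b))
    (compat : ∀ (j : Fin d) (σ τ : Mo n), sle (j, σ) (j, τ) ↔ mle σ τ)
    (x y : LP n d) (hle : encLP x ≤ encLP y) :
    precMS sle x y ∨ precSM mle x y ∨ superdiv x y := by
  obtain ⟨⟨j, σ'⟩, o⟩ := x
  obtain ⟨⟨j', σ⟩, o'⟩ := y
  obtain ⟨h1, h2, h3, h4⟩ := hle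
  simp only [encLP] at h1 h2 h3 h4
  -- indices equal
  have hj : j = j' := by
    have := h1 j
    simp [Finsupp.single_apply] at this
    by_contra hne
    simp [Ne.symm hne] at this
  subst hj
  obtain ⟨lam1, hlam1⟩ := le_iff_exists_add.mp h2
  cases o with
  | none =>
    cases o' with
    | none =>
      refine Or.inr (Or.inr ⟨lam1, ?_, Or.inl ⟨rfl, rfl⟩⟩)
      simp [smulMd, hlam1, add_comm]
    | some m =>
      refine Or.inr (Or.inl (Or.inr ⟨rfl, ⟨m, rfl⟩, lam1, ?_⟩))
      simp [smulMd, hlam1, add_comm]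
  | some m' =>
    cases o' with
    | none => simp at h4
    | some m =>
      simp only [Option.getD_some] at h3
      obtain ⟨lam2, hlam2⟩ := le_iff_exists_add.mp h3
      rcases hmlin.toTotal.total lam1 lam2 with h12 | h21
      · by_cases h21' : mle lam2 lam1
        · -- equal
          have : lam1 = lam2 := hmlin.toIsPartialOrder.toAntisymm.antisymm _ _ h12 h21'
          subst this
          refine Or.inr (Or.inr ⟨lam1, ?_, Or.inr ⟨m, m', rfl, rfl, ?_⟩⟩)
          · simp [smulMd, hlam1, add_comm]
          · rw [hlam2, add_comm]
        · -- lam1 < lam2 : precSM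
          refine Or.inr (Or.inl (Or.inl ⟨m, m', lam1, rfl, rfl, ?_, ?_, ?_⟩))
          · simp [smulMd, hlam1, add_comm]
          · rw [hlam2, add_comm lam1 m']
            exact hmadd _ _ _ h12
          · intro hc
            rw [hlam2, add_comm lam1 m'] at hc
            have := hmlin.toIsPartialOrder.toAntisymm.antisymm _ _ hc (hmadd _ _ _ h12)
            exact h21' (add_left_cancel this ▸ hmlin.toIsPartialOrder.toIsPreorder.toRefl.refl lam1)
      · by_cases h12' : mle lam1 lam2
        · have : lam1 = lam2 := hmlin.toIsPartialOrder.toAntisymm.antisymm _ _ h12' h21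
          subst this
          refine Or.inr (Or.inr ⟨lam1, ?_, Or.inr ⟨m, m', rfl, rfl, ?_⟩⟩)
          · simp [smulMd, hlam1, add_comm]
          · rw [hlam2, add_comm]
        · -- lam2 < lam1 : precMS
          refine Or.inl ⟨m, m', lam2, rfl, rfl, ?_, ?_, ?_⟩
          · rw [hlam2, add_comm]
          · rw [smulMd, compat, hlam1, add_comm lam2 σ']
            exact hmadd _ _ _ h21
          · rw [smulMd, compat, hlam1, add_comm lam2 σ']
            intro hc
            have := hmlin.toIsPartialOrder.toAntisymm.antisymm _ _ hc (hmadd _ _ _ h21)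
            exact h12' (add_left_cancel this ▸ hmlin.toIsPartialOrder.toIsPreorder.toRefl.refl lam1)

/-- finiteness of the top-reduced S-Gröbner basis. If the
admissible orders ≤ₘ and ≤ₛ are compatible, then the set of leading pairs of
top-irreducible sig-polynomials (elements of SP* not top-reducible — via
≺_{m,s}, ≺_{s,m} or super-divisibility — by any other leading pair of SP*)
is finite. -/
theorem topReduced_SGB_finite {k : Type*} [Field k] {n d : ℕ}
    (mle : Mo n → Mo n → Prop) (sle : Md n d → Md n d → Prop)
    (hmlin : IsLinearOrder (Mo n) mle)
    (hm0 : ∀ m : Mo n, mle 0 m)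
    (hmadd : ∀ a b c : Mo n, mle a b → mle (c + a) (c + b))
    (hslin : IsLinearOrder (Md n d) sle)
    (hs0 : ∀ (i : Fin d) (m : Mo n), sle (i, 0) (i, m))
    (hsadd : ∀ (i : Fin d) (a b s : Mo n), sle (i, a) (i, b) → sle (i, s + a) (i, s + b))
    (compat : ∀ (j : Fin d) (σ τ : Mo n), sle (j, σ) (j, τ) ↔ mle σ τ)
    (f : Fin d → MvPolynomial (Fin n) k) :
    {lp ∈ LMSPstar mle sle f | ∀ lp' ∈ LMSPstar mle sle f, lp' ≠ lp →
      ¬ (precMS sle lp' lp ∨ precSM mle lp' lp ∨ superdiv lp' lp)}.Finite := by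
  have hanti : IsAntichain (· ≤ ·) (encLP '' {lp ∈ LMSPstar mle sle f | ∀ lp' ∈ LMSPstar mle sle f, lp' ≠ lp → ¬ (precMS sle lp' lp ∨ precSM mle lp' lp ∨ superdiv lp' lp)}) := by
    rintro _ ⟨x, hx, rfl⟩ _ ⟨y, hy, rfl⟩ hne hle
    exact hy.2 x hx.1 (fun h => hne (by rw [h]))
      (div_implies_red mle sle hmlin hmadd compat x y hle)
  have hpwo : (Set.univ : Set ((Fin d →₀ ℕ) × Mo n × Mo n × ℕ)).IsPWO := by
    have h1 := Set.isPWO_of_wellQuasiOrderedLE (Set.univ : Set (Fin d →₀ ℕ))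
    have h2 := Set.isPWO_of_wellQuasiOrderedLE (Set.univ : Set (Mo n))
    have h4 : (Set.univ : Set ℕ).IsPWO := (Set.isWF_univ_iff.2 inferInstance).isPWO
    simpa [Set.univ_prod_univ] using h1.prod (h2.prod (h2.prod h4))
  have hfin := hanti.finite_of_partiallyWellOrderedOn
    ((hpwo.mono (Set.subset_univ _)) : Set.IsPWO _)
  exact Set.Finite.of_finite_image hfin encLP_injective.injOn
end
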